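/- If β/δ ≥ (1/4)(1 + π/4), then the function F(z) = 1 - 2βz + (δ/2)[z²/(z²+1) + z·arctan(z)] is strictly monotonically decreasing on [0,∞), tends to -∞ as z → ∞, and has precisely one zero in (0,∞). -/

import Mathlib

open Real Set Filter

noncomputable def gfun (z : ℝ) : ℝ := 2*z/(z^2+1)^2 + (Real.arctan z + z/(z^2+1))

lemma gfun_hasDerivAt (z : ℝ) : HasDerivAt gfun ((4 - 4*z^2)/(z^2+1)^3) z := by
  have h1 : (z^2+1 : ℝ) ≠ 0 := by positivity
  have h2 : ((z^2+1 : ℝ)^2) ≠ 0 := by positivity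
  have dv : HasDerivAt (fun z : ℝ => z^2+1) (2*z) z := by
    simpa using ((hasDerivAt_pow 2 z).add_const 1)
  have dv2 : HasDerivAt (fun z : ℝ => (z^2+1)^2) (2*(z^2+1)*(2*z)) z := by
    simpa [Pi.pow_def] using (dv.pow 2)
  have d1 : HasDerivAt (fun z : ℝ => 2*z/(z^2+1)^2)
      ((2*(z^2+1)^2 - 2*z*(2*(z^2+1)*(2*z)))/((z^2+1)^2)^2) z := by
    simpa [Pi.div_def] using ((hasDerivAt_id z).const_mul 2).div dv2 h2
  have d2 : HasDerivAt Real.arctan (1/(1+z^2)) z := Real.hasDerivAt_arctan z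
  have d3 : HasDerivAt (fun z : ℝ => z/(z^2+1)) ((1*(z^2+1) - z*(2*z))/(z^2+1)^2) z := by
    simpa [Pi.div_def] using (hasDerivAt_id z).div dv h1
  have := d1.add (d2.add d3)
  refine this.congr_deriv ?_
  field_simp
  ring

lemma F_hasDerivAt (β δ : ℝ) (z : ℝ) :
    HasDerivAt (fun z => 1 - 2*β*z + (δ/2) * (z^2/(z^2+1) + z * Real.arctan z))
      (-(2*β) + (δ/2) * gfun z) z := by
  have h1 : (z^2+1 : ℝ) ≠ 0 := by positivity
  have dv : HasDerivAt (fun z : ℝ => z^2+1) (2*z) z := by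
    simpa using ((hasDerivAt_pow 2 z).add_const 1)
  have d1 : HasDerivAt (fun z : ℝ => z^2/(z^2+1))
      ((2*z*(z^2+1) - z^2*(2*z))/(z^2+1)^2) z := by
    simpa [Pi.div_def] using (hasDerivAt_pow 2 z).div dv h1
  have d2 : HasDerivAt (fun z : ℝ => z * Real.arctan z)
      (1 * Real.arctan z + z * (1/(1+z^2))) z := by
    simpa [Pi.mul_def] using (hasDerivAt_id z).mul (Real.hasDerivAt_arctan z)
  have dlin : HasDerivAt (fun z : ℝ => 1 - 2*β*z) (-(2*β)) z := by
    simpa using ((hasDerivAt_id z).const_mul (2*β)).const_sub 1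
  have := dlin.add (((d1.add d2)).const_mul (δ/2))
  refine this.congr_deriv ?_
  unfold gfun
  field_simp
  ring

lemma gfun_cont : Continuous gfun :=
  continuous_iff_continuousAt.2 fun z => (gfun_hasDerivAt z).continuousAt

lemma gfun_deriv (z : ℝ) : deriv gfun z = (4 - 4*z^2)/(z^2+1)^3 :=
  (gfun_hasDerivAt z).deriv

lemma gfun_one : gfun 1 = 1 + Real.pi/4 := by
  unfold gfun
  rw [Real.arctan_one]
  norm_num
  ring

lemma gfun_lt (z : ℝ) (hz : 0 ≤ z) (hne : z ≠ 1) : gfun z < 1 + Real.pi/4 := by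
  rw [← gfun_one]
  rcases lt_or_gt_of_ne hne with h | h
  · have mono : StrictMonoOn gfun (Set.Icc 0 1) := by
      apply strictMonoOn_of_deriv_pos (convex_Icc 0 1) gfun_cont.continuousOn
      intro x hx
      rw [interior_Icc] at hx
      rw [gfun_deriv]
      have h1 : x^2 < 1 := by nlinarith [hx.1, hx.2]
      apply div_pos (by linarith) (by positivity)
    exact mono (Set.mem_Icc.2 ⟨hz, h.le⟩) (Set.mem_Icc.2 ⟨zero_le_one, le_refl 1⟩) h
  · have anti : StrictAntiOn gfun (Set.Ici 1) := by
      apply strictAntiOn_of_deriv_neg (convex_Ici 1) gfun_cont.continuousOn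
      intro x hx
      rw [interior_Ici] at hx
      rw [gfun_deriv]
      have h1 : (1:ℝ) < x^2 := by nlinarith [mem_Ioi.1 hx]
      apply div_neg_of_neg_of_pos
      · linarith
      · positivity
    exact anti (Set.mem_Ici.2 (le_refl 1)) (Set.mem_Ici.2 h.le) h

/-- if β/δ ≥ (1/4)(1+π/4) then F is strictly decreasing on [0,∞),
tends to -∞ at ∞, and has exactly one zero in (0,∞). -/
theorem stmt_2 (β δ : ℝ) (hβ : 0 < β) (hδ : 0 < δ)
    (hratio : β/δ ≥ (1/4) * (1 + Real.pi/4))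
    (F : ℝ → ℝ)
    (hF : ∀ z, F z = 1 - 2*β*z + (δ/2) * (z^2/(z^2+1) + z * Real.arctan z)) :
    StrictAntiOn F (Set.Ici (0:ℝ)) ∧
    Tendsto F atTop atBot ∧
    (∃! z : ℝ, z ∈ Set.Ioi (0:ℝ) ∧ F z = 0) := by
  have hFeq : F = fun z => 1 - 2*β*z + (δ/2) * (z^2/(z^2+1) + z * Real.arctan z) := funext hF
  subst hFeq
  have hβδ : (δ/2) * (1 + Real.pi/4) ≤ 2*β := by
    have h := (le_div_iff₀ hδ).1 hratio
    nlinarith [Real.pi_pos]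
  have hcont : Continuous (fun z : ℝ => 1 - 2*β*z + (δ/2) * (z^2/(z^2+1) + z * Real.arctan z)) :=
    continuous_iff_continuousAt.2 fun z => (F_hasDerivAt β δ z).continuousAt
  have hderiv : ∀ z : ℝ, deriv (fun z => 1 - 2*β*z + (δ/2) * (z^2/(z^2+1) + z * Real.arctan z)) z
      = -(2*β) + (δ/2) * gfun z := fun z => (F_hasDerivAt β δ z).deriv
  have hneg : ∀ z : ℝ, 0 ≤ z → z ≠ 1 →
      deriv (fun z => 1 - 2*β*z + (δ/2) * (z^2/(z^2+1) + z * Real.arctan z)) z < 0 := by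
    intro z hz hne
    rw [hderiv]
    have h1 := gfun_lt z hz hne
    have h2 := mul_lt_mul_of_pos_left h1 (half_pos hδ)
    linarith
  have anti1 : StrictAntiOn (fun z : ℝ => 1 - 2*β*z + (δ/2) * (z^2/(z^2+1) + z * Real.arctan z))
      (Set.Icc 0 1) := by
    apply strictAntiOn_of_deriv_neg (convex_Icc 0 1) hcont.continuousOn
    intro x hx
    rw [interior_Icc] at hx
    exact hneg x hx.1.le (ne_of_lt hx.2)
  have anti2 : StrictAntiOn (fun z : ℝ => 1 - 2*β*z + (δ/2) * (z^2/(z^2+1) + z * Real.arctan z))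
      (Set.Ici 1) := by
    apply strictAntiOn_of_deriv_neg (convex_Ici 1) hcont.continuousOn
    intro x hx
    rw [interior_Ici] at hx
    exact hneg x (by linarith [Set.mem_Ioi.1 hx]) (ne_of_gt (Set.mem_Ioi.1 hx))
  have anti : StrictAntiOn (fun z : ℝ => 1 - 2*β*z + (δ/2) * (z^2/(z^2+1) + z * Real.arctan z))
      (Set.Ici 0) := by
    intro x hx y hy hxy
    simp only [Set.mem_Ici] at hx hy
    rcases le_or_gt y 1 with h | h
    · exact anti1 (Set.mem_Icc.2 ⟨hx, hxy.le.trans h⟩) (Set.mem_Icc.2 ⟨hy, h⟩) hxy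
    · rcases le_or_gt 1 x with h2 | h2
      · exact anti2 (Set.mem_Ici.2 h2) (Set.mem_Ici.2 (h2.trans hxy.le)) hxy
      · calc (fun z : ℝ => 1 - 2*β*z + (δ/2) * (z^2/(z^2+1) + z * Real.arctan z)) y
            < (fun z : ℝ => 1 - 2*β*z + (δ/2) * (z^2/(z^2+1) + z * Real.arctan z)) 1 :=
              anti2 (Set.mem_Ici.2 le_rfl) (Set.mem_Ici.2 h.le) h
          _ < _ := anti1 (Set.mem_Icc.2 ⟨hx, h2.le⟩) (Set.mem_Icc.2 ⟨zero_le_one, le_rfl⟩) h2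
  have hk : δ*Real.pi/4 - 2*β < 0 := by nlinarith [Real.pi_lt_d2, Real.pi_pos]
  have hlin : Tendsto (fun z : ℝ => (1 + δ/2) + (δ*Real.pi/4 - 2*β) * z) atTop atBot := by
    apply tendsto_atBot_add_const_left
    exact (tendsto_const_mul_atBot_of_neg hk).2 tendsto_id
  have hub : ∀ᶠ z in atTop, (fun z : ℝ => 1 - 2*β*z + (δ/2) * (z^2/(z^2+1) + z * Real.arctan z)) z
      ≤ (1 + δ/2) + (δ*Real.pi/4 - 2*β) * z := by
    filter_upwards [eventually_ge_atTop (0:ℝ)] with z hz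
    have hd : (0:ℝ) < z^2 + 1 := by positivity
    have h1 : z^2/(z^2+1) ≤ 1 := by rw [div_le_one hd]; linarith
    have h2 : z * Real.arctan z ≤ z * (Real.pi/2) :=
      mul_le_mul_of_nonneg_left (Real.arctan_lt_pi_div_two z).le hz
    nlinarith
  have htend : Tendsto (fun z : ℝ => 1 - 2*β*z + (δ/2) * (z^2/(z^2+1) + z * Real.arctan z))
      atTop atBot := tendsto_atBot_mono' atTop hub hlin
  refine ⟨anti, htend, ?_⟩
  obtain ⟨b, hbneg, hb1⟩ : ∃ b : ℝ,
      (fun z : ℝ => 1 - 2*β*z + (δ/2) * (z^2/(z^2+1) + z * Real.arctan z)) b < 0 ∧ 1 < b := by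
    exact ((htend.eventually (eventually_lt_atBot 0)).and (eventually_gt_atTop 1)).exists
  have hF0 : (fun z : ℝ => 1 - 2*β*z + (δ/2) * (z^2/(z^2+1) + z * Real.arctan z)) 0 = 1 := by
    simp
  obtain ⟨c, hc, hFc⟩ : ∃ c ∈ Set.Ioo (0:ℝ) b,
      (fun z : ℝ => 1 - 2*β*z + (δ/2) * (z^2/(z^2+1) + z * Real.arctan z)) c = 0 := by
    have hsub := intermediate_value_Ioo' (by linarith : (0:ℝ) ≤ b) hcont.continuousOn
    have h0mem : (0:ℝ) ∈ Set.Ioo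
        ((fun z : ℝ => 1 - 2*β*z + (δ/2) * (z^2/(z^2+1) + z * Real.arctan z)) b)
        ((fun z : ℝ => 1 - 2*β*z + (δ/2) * (z^2/(z^2+1) + z * Real.arctan z)) 0) := by
      rw [hF0]; exact ⟨hbneg, zero_lt_one⟩
    obtain ⟨c, hc, hFc⟩ := hsub h0mem
    exact ⟨c, hc, hFc⟩
  refine ⟨c, ⟨Set.mem_Ioi.2 hc.1, hFc⟩, ?_⟩
  rintro y ⟨hy, hFy⟩
  have hy0 := Set.mem_Ioi.1 hy
  rcases lt_trichotomy y c with h | h | h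
  · have := anti (Set.mem_Ici.2 hy0.le) (Set.mem_Ici.2 hc.1.le) h
    rw [hFy, hFc] at this; exact absurd this (lt_irrefl 0)
  · exact h
  · have := anti (Set.mem_Ici.2 hc.1.le) (Set.mem_Ici.2 hy0.le) h
    rw [hFy, hFc] at this; exact absurd this (lt_irrefl 0)
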